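/- Let S be a finite p-group, A = ℤ[ζ] the subring of ℂ generated by a primitive |S|-th root of unity ζ, and 𝔭 a nonzero prime ideal of A with 𝔭 ∩ ℤ = pℤ. Then for every complex character χ of a finite-dimensional representation of S and every s ∈ S, χ(s) ≡ χ(1) modulo 𝔭. -/

import Mathlib

open Matrix

set_option maxHeartbeats 1000000
set_option synthInstance.maxHeartbeats 100000


/-- For a finite `p`-group `S`, `A = ℤ[ζ]` the subring of `ℂ` generated by a primitive
`|S|`-th root of unity, and `𝔭` a nonzero prime ideal of `A` lying over `pℤ`, every
complex character `χ` of a finite-dimensional representation of `S` satisfies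
`χ(s) ≡ χ(1) mod 𝔭`. -/
theorem character_congruent_dim_mod_prime (p : ℕ) (hp : p.Prime) (S : Type) [Group S]
    [Fintype S] (hS : IsPGroup p S) (ζ : ℂ) (hζ : IsPrimitiveRoot ζ (Fintype.card S))
    (A : Subring ℂ) (hA : A = (Algebra.adjoin ℤ ({ζ} : Set ℂ)).toSubring)
    (𝔭 : Ideal A) (h𝔭 : 𝔭.IsPrime) (hne : 𝔭 ≠ ⊥)
    (hover : 𝔭.comap (algebraMap ℤ A) = Ideal.span {(p : ℤ)})
    (V : FDRep ℂ S) (s : S) :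
    ∃ a b : A, (a : ℂ) = V.character s ∧ (b : ℂ) = V.character 1 ∧ a - b ∈ 𝔭 := by
  classical
  have hpfact : Fact p.Prime := ⟨hp⟩
  set m := Fintype.card S with hm
  have hm0 : 0 < m := Fintype.card_pos
  have : NeZero m := ⟨hm0.ne'⟩
  -- p ∈ 𝔭
  have hpA : ((p : ℤ) : A) ∈ 𝔭 := by
    have : (p : ℤ) ∈ Ideal.span {(p : ℤ)} := Ideal.mem_span_singleton_self _
    rw [← hover, Ideal.mem_comap] at this
    exact this
  -- the residue ring has characteristic p
  have hquot : Nontrivial (A ⧸ 𝔭) := Ideal.Quotient.nontrivial_iff.mpr h𝔭.ne_top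
  have hpA' : ((p : ℕ) : A) ∈ 𝔭 := by exact_mod_cast hpA
  have hpzero : ((p : ℕ) : A ⧸ 𝔭) = 0 := by
    rw [← map_natCast (Ideal.Quotient.mk 𝔭)]
    exact Ideal.Quotient.eq_zero_iff_mem.mpr hpA'
  haveI hcharP : CharP (A ⧸ 𝔭) p := (CharP.charP_iff_prime_eq_zero hp).mpr hpzero
  haveI := h𝔭
  haveI hdomain : IsDomain (A ⧸ 𝔭) := inferInstance
  -- card S is a power of p
  obtain ⟨n, hn⟩ := (IsPGroup.iff_card (p := p) (G := S)).mp hS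
  rw [Nat.card_eq_fintype_card, ← hm] at hn
  -- key: any element of A which is an m-th root of unity is ≡ 1 mod 𝔭
  have key : ∀ a : A, a ^ m = 1 → a - 1 ∈ 𝔭 := by
    intro a ha
    have h1 : (Ideal.Quotient.mk 𝔭 (a - 1)) ^ m = 0 := by
      rw [map_sub, hn, sub_pow_char_pow, _root_.map_one, one_pow, ← map_pow, ← hn, ha, _root_.map_one, sub_self]
    have h2 : Ideal.Quotient.mk 𝔭 (a - 1) = 0 := pow_eq_zero_iff hm0.ne' |>.mp h1
    exact Ideal.Quotient.eq_zero_iff_mem.mp h2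
  -- lift of an m-th root of unity in ℂ to A, congruent to 1 mod 𝔭
  have hζA : ζ ∈ A := by
    rw [hA]
    exact Algebra.subset_adjoin rfl
  have lift : ∀ μ : ℂ, μ ^ m = 1 → ∃ a : A, (a : ℂ) = μ ∧ a - 1 ∈ 𝔭 := by
    intro μ hμ
    obtain ⟨i, _, rfl⟩ := hζ.eq_pow_of_pow_eq_one hμ
    refine ⟨⟨ζ, hζA⟩ ^ i, by push_cast; ring, key _ ?_⟩
    ext
    push_cast
    rw [← pow_mul, mul_comm, pow_mul, hζ.pow_eq_one, one_pow]
  -- sum over a multiset of m-th roots of unity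
  have sum_lift : ∀ t : Multiset ℂ, (∀ μ ∈ t, μ ^ m = 1) →
      ∃ a : A, (a : ℂ) = t.sum ∧ a - (t.card : A) ∈ 𝔭 := by
    intro t
    induction t using Multiset.induction with
    | empty => intro _; exact ⟨0, by simp, by simp⟩
    | cons μ t ih =>
      intro h
      obtain ⟨a, ha, ha'⟩ := ih (fun x hx => h x (Multiset.mem_cons_of_mem hx))
      obtain ⟨c, hc, hc'⟩ := lift μ (h μ (Multiset.mem_cons_self μ t))
      refine ⟨c + a, by push_cast; rw [hc, ha]; simp, ?_⟩
      have : c + a - ((μ ::ₘ t).card : A) = (c - 1) + (a - (t.card : A)) := by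
        rw [Multiset.card_cons]
        push_cast
        ring
      rw [this]
      exact Ideal.add_mem _ hc' ha'
  -- set up the matrix of ρ s
  set d := Module.finrank ℂ V with hd
  let b : Module.Basis (Fin d) ℂ V := Module.finBasis ℂ V
  set M : Matrix (Fin d) (Fin d) ℂ := LinearMap.toMatrix b b (V.ρ s) with hM
  -- M ^ m = 1
  have hMpow : M ^ m = 1 := by
    have h1 : (V.ρ s) ^ m = 1 := by
      rw [← map_pow, pow_card_eq_one, _root_.map_one]
    have : M = LinearMap.toMatrixAlgEquiv b (V.ρ s) := rfl
    rw [this, ← map_pow, h1, _root_.map_one]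
  -- every root of the charpoly is an m-th root of unity
  have hroots : ∀ μ ∈ M.charpoly.roots, μ ^ m = 1 := by
    intro μ hμ
    have hroot : M.charpoly.eval μ = 0 := (Polynomial.mem_roots'.mp hμ).2
    have hdet : (Matrix.scalar (Fin d) μ - M).det = 0 := by
      rw [Matrix.charpoly, _root_.eval_det, Matrix.matPolyEquiv_charmatrix] at hroot
      rwa [Polynomial.eval_sub, Polynomial.eval_X, Polynomial.eval_C] at hroot
    obtain ⟨v, hv, hmul⟩ := (Matrix.exists_mulVec_eq_zero_iff).mpr hdet
    have hMv : M *ᵥ v = μ • v := by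
      rw [Matrix.sub_mulVec] at hmul
      have h2 : Matrix.scalar (Fin d) μ *ᵥ v = μ • v := by
        ext i
        simp [Matrix.scalar, Matrix.mulVec_diagonal]
      rw [h2, sub_eq_zero] at hmul
      exact hmul.symm
    have hpowv : ∀ k : ℕ, (M ^ k) *ᵥ v = μ ^ k • v := by
      intro k
      induction k with
      | zero => simp [Matrix.one_mulVec]
      | succ k ih =>
        rw [pow_succ, ← Matrix.mulVec_mulVec, hMv, Matrix.mulVec_smul, ih, pow_succ,
          smul_smul, mul_comm]
    have hv1 : v = μ ^ m • v := by
      have := hpowv m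
      rwa [hMpow, Matrix.one_mulVec] at this
    obtain ⟨i, hi⟩ := Function.ne_iff.mp hv
    have h3 : v i = μ ^ m * v i := by
      conv_lhs => rw [hv1]
      simp
    have h4 : (μ ^ m - 1) * v i = 0 := by rw [sub_mul, one_mul, ← h3, sub_self]
    rcases mul_eq_zero.mp h4 with h | h
    · exact sub_eq_zero.mp h
    · exact absurd h hi
  -- the character value at s is the sum of the roots
  have hchar_s : V.character s = M.charpoly.roots.sum := by
    have h1 : V.character s = M.trace := LinearMap.trace_eq_matrix_trace ℂ b (V.ρ s)
    rw [h1, Matrix.trace_eq_sum_roots_charpoly]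
  -- the number of roots is d
  have hcard : M.charpoly.roots.card = d := by
    have h1 : M.charpoly.roots.card = M.charpoly.natDegree :=
      Polynomial.splits_iff_card_roots.mp (IsAlgClosed.splits M.charpoly)
    rw [h1, Matrix.charpoly_natDegree_eq_dim, Fintype.card_fin]
  obtain ⟨a, ha, ha'⟩ := sum_lift M.charpoly.roots hroots
  refine ⟨a, (d : A), ?_, ?_, ?_⟩
  · rw [ha, hchar_s]
  · rw [FDRep.char_one]
    push_cast
    rfl
  · rw [← hcard]
    exact ha'
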